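/- Under the DAN (Polyak adaptive Newton) iteration, for every k ≤ k₀ one has ‖∇f(x_k)‖ ≤ ‖∇f(x₀)‖ − (μ²/(2L))·k, and for every k > k₀ one has ‖∇f(x_k)‖ ≤ (2μ²/L)·γ^(2^(k−k₀)). -/

import Mathlib

open Filter Topology

lemma dan_taylor {E : Type*} [NormedAddCommGroup E] [NormedSpace ℝ E]
    (G : E → E) (hG : ContDiff ℝ 1 G) (L : ℝ)
    (hlip : ∀ x y, ‖fderiv ℝ G x - fderiv ℝ G y‖ ≤ L * ‖x - y‖)
    (x y : E) :
    ‖G y - G x - fderiv ℝ G x (y - x)‖ ≤ L / 2 * ‖y - x‖ ^ 2 := by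
  set d := y - x with hd
  have hGd : Differentiable ℝ G := hG.differentiable one_ne_zero
  set φ : ℝ → E := fun t => G (x + t • d) - G x - t • (fderiv ℝ G x d) with hφ
  have hφ' : ∀ t : ℝ, HasDerivAt φ (fderiv ℝ G (x + t • d) d - fderiv ℝ G x d) t := by
    intro t
    have h1 : HasDerivAt (fun t : ℝ => x + t • d) d t := by
      simpa using ((hasDerivAt_id t).smul_const d).const_add x
    have h2 : HasDerivAt (fun t : ℝ => G (x + t • d)) (fderiv ℝ G (x + t • d) d) t :=
      (hGd (x + t • d)).hasFDerivAt.comp_hasDerivAt t h1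
    have h3 := (h2.sub_const (G x)).sub ((hasDerivAt_id t).smul_const (fderiv ℝ G x d))
    simp only [one_smul] at h3
    exact h3
  have key : ∀ t ∈ Set.Icc (0:ℝ) 1, ‖φ t‖ ≤ L / 2 * ‖d‖ ^ 2 * t ^ 2 := by
    intro t ht
    refine image_norm_le_of_norm_deriv_right_le_deriv_boundary
      (f := φ) (f' := fun t => fderiv ℝ G (x + t • d) d - fderiv ℝ G x d)
      (a := 0) (b := 1)
      (B := fun t => L / 2 * ‖d‖ ^ 2 * t ^ 2) (B' := fun t => L / 2 * ‖d‖ ^ 2 * (2 * t))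
      ?_ (fun s _ => (hφ' s).hasDerivWithinAt) ?_ ?_ ?_ ht
    · exact fun s _ => (hφ' s).continuousAt.continuousWithinAt
    · simp [φ]
    · intro s
      simpa using ((hasDerivAt_pow 2 s).const_mul (L / 2 * ‖d‖ ^ 2))
    · intro s hs
      have h1 : ‖fderiv ℝ G (x + s • d) d - fderiv ℝ G x d‖
          ≤ ‖fderiv ℝ G (x + s • d) - fderiv ℝ G x‖ * ‖d‖ := by
        rw [← ContinuousLinearMap.sub_apply]
        exact (fderiv ℝ G (x + s • d) - fderiv ℝ G x).le_opNorm d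
      have h2 : ‖fderiv ℝ G (x + s • d) - fderiv ℝ G x‖ ≤ L * (s * ‖d‖) := by
        have := hlip (x + s • d) x
        simpa [norm_smul, abs_of_nonneg hs.1] using this
      have hdn : (0:ℝ) ≤ ‖d‖ := norm_nonneg d
      nlinarith [norm_nonneg (fderiv ℝ G (x + s • d) d - fderiv ℝ G x d)]
  have hxy : x + d = y := by rw [hd]; abel
  have h1 := key 1 (by norm_num)
  simp only [φ, one_smul, hxy, one_pow, mul_one] at h1
  exact h1

set_option maxHeartbeats 1000000 in
theorem dan_gradient_bounds (p : ℕ) (hp : 1 ≤ p)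
    (f : EuclideanSpace ℝ (Fin p) → ℝ) (hf : ContDiff ℝ 2 f)
    (μ L : ℝ) (hμ : 0 < μ) (hL : 0 < L)
    (hstrong : ∀ x v : EuclideanSpace ℝ (Fin p),
      μ * ‖v‖ ^ 2 ≤ inner ℝ (fderiv ℝ (gradient f) x v) v)
    (hlip : ∀ x y : EuclideanSpace ℝ (Fin p),
      ‖fderiv ℝ (gradient f) x - fderiv ℝ (gradient f) y‖ ≤ L * ‖x - y‖)
    (x : ℕ → EuclideanSpace ℝ (Fin p)) (α : ℕ → ℝ)
    (hα : ∀ k, α k = min 1 (μ ^ 2 / (L * ‖gradient f (x k)‖)))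
    (hupd : ∀ k, fderiv ℝ (gradient f) (x k) (x (k + 1) - x k)
      = -(α k) • gradient f (x k))
    (k₀ : ℕ) (hk₀ : (k₀ : ℤ) = max 0 (⌈2 * L / μ ^ 2 * ‖gradient f (x 0)‖⌉ - 2))
    (γ : ℝ) (hγ : γ = L / (2 * μ ^ 2) * ‖gradient f (x 0)‖ - (k₀ : ℝ) / 4) :
    (∀ k ≤ k₀, ‖gradient f (x k)‖ ≤ ‖gradient f (x 0)‖ - μ ^ 2 / (2 * L) * k) ∧
    (∀ k > k₀, ‖gradient f (x k)‖ ≤ 2 * μ ^ 2 / L * γ ^ 2 ^ (k - k₀)) := by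
  have hGc : ContDiff ℝ 1 (gradient f) := by
    have h1 : ContDiff ℝ 1 (fderiv ℝ f) := hf.fderiv_right (by norm_num)
    have h2 : gradient f
        = fun y => (InnerProductSpace.toDual ℝ (EuclideanSpace ℝ (Fin p))).symm (fderiv ℝ f y) :=
      rfl
    rw [h2]
    exact (InnerProductSpace.toDual ℝ (EuclideanSpace ℝ (Fin p))).symm.contDiff.comp h1
  have hgnn : ∀ k, (0:ℝ) ≤ ‖gradient f (x k)‖ := fun k => norm_nonneg _
  set g : ℕ → ℝ := fun k => ‖gradient f (x k)‖ with hg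
  set h : ℕ → ℝ := fun k => L / (2 * μ ^ 2) * g k with hh
  have hc : 0 < L / (2 * μ ^ 2) := by positivity
  have hhnn : ∀ k, 0 ≤ h k := fun k => mul_nonneg hc.le (hgnn k)
  have hα0 : ∀ k, 0 ≤ α k := fun k => by
    rw [hα k]; exact le_min zero_le_one (div_nonneg (by positivity) (by positivity))
  have hα1 : ∀ k, α k ≤ 1 := fun k => by rw [hα k]; exact min_le_left _ _
  -- step length bound: μ * ‖d‖ ≤ α k * g k
  have hdle : ∀ k, μ * ‖x (k + 1) - x k‖ ≤ α k * g k := by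
    intro k
    set d := x (k + 1) - x k with hd
    have h1 : μ * ‖d‖ ^ 2 ≤ inner ℝ (fderiv ℝ (gradient f) (x k) d) d := hstrong (x k) d
    rw [hupd k] at h1
    rw [real_inner_smul_left] at h1
    have hi := abs_real_inner_le_norm (gradient f (x k)) d
    rcases abs_le.1 hi with ⟨hi1, hi2⟩
    have hgk : g k = ‖gradient f (x k)‖ := rfl
    have hα0k := hα0 k
    rcases eq_or_lt_of_le (norm_nonneg d) with h0 | h0
    · rw [← h0, hgk]
      have := mul_nonneg hα0k (hgnn k)
      nlinarith
    · rw [hgk]; nlinarith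
  -- one step inequality on h
  have hstep : ∀ k, h (k + 1) ≤ (1 - α k) * h k + (α k * h k) ^ 2 := by
    intro k
    set d := x (k + 1) - x k with hd
    have htay := dan_taylor (gradient f) hGc L hlip (x k) (x (k + 1))
    rw [← hd, hupd k] at htay
    have hid : gradient f (x (k + 1))
        = (gradient f (x (k + 1)) - gradient f (x k) - (-(α k) • gradient f (x k)))
          + (1 - α k) • gradient f (x k) := by
      rw [sub_smul, one_smul, neg_smul]; abel
    have hgs : g (k + 1) ≤ (1 - α k) * g k + L / 2 * ‖d‖ ^ 2 := by
      calc g (k + 1) = ‖gradient f (x (k + 1))‖ := rfl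
        _ ≤ ‖gradient f (x (k + 1)) - gradient f (x k) - (-(α k) • gradient f (x k))‖
            + ‖(1 - α k) • gradient f (x k)‖ := by
            conv_lhs => rw [hid]
            exact norm_add_le _ _
        _ ≤ L / 2 * ‖d‖ ^ 2 + (1 - α k) * g k := by
            gcongr
            rw [norm_smul, Real.norm_eq_abs, abs_of_nonneg (by linarith [hα1 k])]
        _ = (1 - α k) * g k + L / 2 * ‖d‖ ^ 2 := by ring
    have h1 : ‖d‖ ≤ α k * g k / μ := by
      rw [le_div_iff₀ hμ]; have := hdle k; rw [← hd] at this; nlinarith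
    have hdsq : ‖d‖ ^ 2 ≤ (α k * g k / μ) ^ 2 := pow_le_pow_left₀ (norm_nonneg d) h1 2
    have hgf : g (k + 1) ≤ (1 - α k) * g k + L / 2 * (α k * g k / μ) ^ 2 := by
      nlinarith
    have hh1 : h (k + 1) = L / (2 * μ ^ 2) * g (k + 1) := rfl
    have hh2 : (1 - α k) * h k + (α k * h k) ^ 2
        = L / (2 * μ ^ 2) * ((1 - α k) * g k + L / 2 * (α k * g k / μ) ^ 2) := by
      simp only [hh]
      field_simp
    rw [hh1, hh2]
    exact mul_le_mul_of_nonneg_left hgf hc.le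
  -- α h relation
  have hαh1 : ∀ k, 1 / 2 ≤ h k → α k * h k = 1 / 2 := by
    intro k hk2
    have hgpos : 0 < g k := by
      rcases eq_or_lt_of_le (hgnn k) with h0 | h0
      · exfalso
        have : h k = 0 := by rw [hh]; simp only [hg]; rw [← h0]; ring
        rw [this] at hk2; linarith
      · exact h0
    have hhk : h k = L / (2 * μ ^ 2) * g k := rfl
    have hμLg : μ ^ 2 / (L * g k) ≤ 1 := by
      rw [div_le_one (by positivity)]
      rw [hhk] at hk2
      have : μ ^ 2 ≤ L * g k := by
        rw [div_mul_eq_mul_div, le_div_iff₀ (by positivity)] at hk2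
        nlinarith
      exact this
    rw [hα k, min_eq_right hμLg, hhk]
    field_simp
  have hαh2 : ∀ k, 0 < g k → h k < 1 / 2 → α k = 1 := by
    intro k h0 hk2
    have hhk : h k = L / (2 * μ ^ 2) * g k := rfl
    have hgs : L * g k < μ ^ 2 := by
      rw [hhk, div_mul_eq_mul_div, div_lt_iff₀ (by positivity)] at hk2
      nlinarith
    have : (1:ℝ) ≤ μ ^ 2 / (L * g k) := by
      rw [le_div_iff₀ (by positivity)]
      nlinarith
    rw [hα k, min_eq_left this]
  have hstepA : ∀ k, h (k + 1) ≤ h k ^ 2 := by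
    intro k
    have hs := hstep k
    rcases eq_or_lt_of_le (hgnn k) with h0 | h0
    · have hz : h k = 0 := by
        have : g k = 0 := h0.symm
        rw [hh]; simp only; rw [this, mul_zero]
      rw [hz] at hs ⊢
      simpa using hs
    rcases lt_or_ge (h k) (1/2) with hk2 | hk2
    · rw [hαh2 k h0 hk2] at hs
      simpa using hs
    · have hp2 := hαh1 k hk2
      have := hα0 k
      nlinarith [hhnn k]
  have hstepB : ∀ k, h (k + 1) ≤ max (h k - 1/4) (1/4) := by
    intro k
    rcases lt_or_ge (h k) (1/2) with hk2 | hk2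
    · refine le_trans (hstepA k) (le_trans ?_ (le_max_right _ _))
      nlinarith [hhnn k]
    · refine le_trans ?_ (le_max_left _ _)
      have hs := hstep k
      have hp2 := hαh1 k hk2
      have := hα0 k
      nlinarith
  have hc4 : 2 * L / μ ^ 2 * g 0 = 4 * h 0 := by
    rw [hh]; simp only; field_simp; ring
  -- if k₀ ≥ 1 then k₀ + 1 < 4 h 0
  have hub : 1 ≤ k₀ → ((k₀ : ℝ) + 1) < 4 * h 0 := by
    intro hk₀pos
    have hceil : (⌈2 * L / μ ^ 2 * g 0⌉ : ℤ) = (k₀ : ℤ) + 2 := by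
      rcases le_or_gt (⌈2 * L / μ ^ 2 * g 0⌉ - 2) 0 with hle | hlt
      · rw [max_eq_left hle] at hk₀; omega
      · rw [max_eq_right hlt.le] at hk₀; omega
    have h2 : ((⌈2 * L / μ ^ 2 * g 0⌉ : ℤ) : ℝ) < 2 * L / μ ^ 2 * g 0 + 1 :=
      Int.ceil_lt_add_one _
    rw [hceil, hc4] at h2
    push_cast at h2
    linarith
  -- phase 1 in terms of h
  have phase1 : ∀ k ≤ k₀, h k ≤ h 0 - (k : ℝ) / 4 := by
    intro k
    induction k with
    | zero => intro _; simp
    | succ n ih =>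
      intro hn
      have hn' : n ≤ k₀ := le_of_lt (Nat.lt_of_lt_of_le (Nat.lt_succ_self n) hn)
      have ih' := ih hn'
      have hk₀pos : 1 ≤ k₀ := by omega
      have hub' := hub hk₀pos
      have hn2 : ((n : ℝ) + 1) ≤ (k₀ : ℝ) := by exact_mod_cast hn
      have := hstepB n
      rcases max_cases (h n - 1/4) (1/4 : ℝ) with ⟨he, _⟩ | ⟨he, _⟩ <;> rw [he] at this
      · push_cast; linarith
      · push_cast; linarith
  have hγeq : γ = h 0 - (k₀ : ℝ) / 4 := hγ
  have hγnn : 0 ≤ γ := by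
    rcases Nat.eq_zero_or_pos k₀ with h0 | h0
    · rw [hγeq, h0]; simpa using hhnn 0
    · have := hub h0
      rw [hγeq]
      push_cast
      linarith
  have hk0γ : h k₀ ≤ γ := by
    have := phase1 k₀ le_rfl
    rw [hγeq]; linarith
  have phase2 : ∀ m, 1 ≤ m → h (k₀ + m) ≤ γ ^ 2 ^ m := by
    intro m hm
    induction m with
    | zero => omega
    | succ n ih =>
      rcases Nat.eq_zero_or_pos n with h0 | h0
      · subst h0
        calc h (k₀ + 1) ≤ h k₀ ^ 2 := hstepA k₀
          _ ≤ γ ^ 2 := pow_le_pow_left₀ (hhnn k₀) hk0γ 2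
          _ = γ ^ 2 ^ 1 := by norm_num
      · have ih' := ih h0
        calc h (k₀ + (n + 1)) = h ((k₀ + n) + 1) := by ring_nf
          _ ≤ h (k₀ + n) ^ 2 := hstepA _
          _ ≤ (γ ^ 2 ^ n) ^ 2 := pow_le_pow_left₀ (hhnn _) ih' 2
          _ = γ ^ 2 ^ (n + 1) := by rw [← pow_mul, pow_succ]
  constructor
  · intro k hk
    have h1 := phase1 k hk
    have hr : L / (2 * μ ^ 2) * (‖gradient f (x 0)‖ - μ ^ 2 / (2 * L) * k)
        = h 0 - (k : ℝ) / 4 := by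
      rw [hh]; simp only [hg]; field_simp; ring
    have hgoal : L / (2 * μ ^ 2) * ‖gradient f (x k)‖
        ≤ L / (2 * μ ^ 2) * (‖gradient f (x 0)‖ - μ ^ 2 / (2 * L) * k) := by
      rw [hr]; exact h1
    exact le_of_mul_le_mul_left hgoal hc
  · intro k hk
    have hm : 1 ≤ k - k₀ := by omega
    have h2 := phase2 (k - k₀) hm
    rw [Nat.add_sub_cancel' (le_of_lt hk)] at h2
    have hgk : (‖gradient f (x k)‖ : ℝ) = 2 * μ ^ 2 / L * h k := by
      rw [hh]; simp only [hg]; field_simp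
    rw [hgk]
    exact mul_le_mul_of_nonneg_left h2 (by positivity)
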